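/- Let (L,·) be a loop, A(L) a subgroup of its automorphism group, and H(L) the A(L)-holomorph of (L,·). If H(L) is an Osborn loop, then for every x ∈ L and all φ ∈ A(L) the triples (I, U, U) are autotopisms of (L,·) for each of the bijections U₁ : y ↦ (y/x)·φ⁻¹(x), U₂ : y ↦ x·(((x\y)/x)·φ⁻¹(x)), and U₃ : y ↦ y·(x^λ·φ⁻¹(x)). -/

import Mathlib

/-- A loop: a set with multiplication, left and right division, and a
two-sided identity element, such that all translations are bijections
(expressed via the division operations). -/
structure Loop (L : Type*) where
  mul : L → L → L
  ldiv : L → L → L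
  rdiv : L → L → L
  e : L
  mul_ldiv : ∀ x y, mul x (ldiv x y) = y
  ldiv_mul : ∀ x y, ldiv x (mul x y) = y
  rdiv_mul : ∀ x y, mul (rdiv y x) x = y
  mul_rdiv : ∀ x y, rdiv (mul y x) x = y
  e_mul : ∀ x, mul e x = x
  mul_e : ∀ x, mul x e = x

namespace Loop

variable {L : Type*} (Q : Loop L)

/-- The left inverse `x^λ`, the unique element with `x^λ · x = e`. -/
def linv (x : L) : L := Q.rdiv Q.e x

/-- The right inverse `x^ρ`, the unique element with `x · x^ρ = e`. -/
def rinv (x : L) : L := Q.ldiv x Q.e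

/-- A loop is Osborn if `x·((y·z)·x) = (x·((y·x^λ)·x))·(z·x)` for all `x,y,z`. -/
def IsOsborn : Prop :=
  ∀ x y z, Q.mul x (Q.mul (Q.mul y z) x) =
    Q.mul (Q.mul x (Q.mul (Q.mul y (Q.linv x)) x)) (Q.mul z x)

/-- The automorphism group of a loop, as a subgroup of the permutation group. -/
def autGroup : Subgroup (Equiv.Perm L) where
  carrier := {α | ∀ x y, α (Q.mul x y) = Q.mul (α x) (α y)}
  one_mem' := fun _ _ => rfl
  mul_mem' := by
    intro α β ha hb x y
    simp only [Equiv.Perm.mul_apply]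
    rw [hb x y, ha]
  inv_mem' := by
    intro α ha x y
    apply α.injective
    rw [ha]
    simp

theorem mem_autGroup_iff {α : Equiv.Perm L} :
    α ∈ Q.autGroup ↔ ∀ x y, α (Q.mul x y) = Q.mul (α x) (α y) := Iff.rfl

theorem aut_fix_e {α : Equiv.Perm L} (hα : α ∈ Q.autGroup) : α Q.e = Q.e := by
  have h1 : α (Q.mul Q.e Q.e) = Q.mul (α Q.e) (α Q.e) := hα Q.e Q.e
  rw [Q.mul_e] at h1
  have h2 : Q.mul (α Q.e) (α Q.e) = Q.mul (α Q.e) Q.e := by rw [Q.mul_e, ← h1]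
  have h3 := congrArg (Q.ldiv (α Q.e)) h2
  rwa [Q.ldiv_mul, Q.ldiv_mul] at h3

/-- The `A`-holomorph of a loop `(L,·)`: the loop on `A × L` with multiplication
`(α,x)∘(β,y) = (α∘β, β(x)·y)`, where `A` is a subgroup of the automorphism group. -/
def Holomorph (A : Subgroup (Equiv.Perm L)) (hA : A ≤ Q.autGroup) : Loop (A × L) where
  mul p q := (p.1 * q.1, Q.mul ((q.1 : Equiv.Perm L) p.2) q.2)
  ldiv p r := (p.1⁻¹ * r.1, Q.ldiv (((p.1⁻¹ * r.1 : A) : Equiv.Perm L) p.2) r.2)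
  rdiv r q := (r.1 * q.1⁻¹, ((q.1⁻¹ : A) : Equiv.Perm L) (Q.rdiv r.2 q.2))
  e := (1, Q.e)
  mul_ldiv p r := by
    refine Prod.ext ?_ ?_
    · simp
    · simp [Q.mul_ldiv]
  ldiv_mul p q := by
    refine Prod.ext ?_ ?_
    · simp
    · simp [inv_mul_cancel_left, Q.ldiv_mul]
  rdiv_mul r q := by
    refine Prod.ext ?_ ?_
    · simp
    · simp [Q.rdiv_mul]
  mul_rdiv p q := by
    refine Prod.ext ?_ ?_
    · simp
    · simp [Q.mul_rdiv]
  e_mul p := by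
    refine Prod.ext ?_ ?_
    · simp
    · simp [Q.aut_fix_e (hA p.1.2), Q.e_mul]
  mul_e p := by
    refine Prod.ext ?_ ?_
    · simp
    · simp [Q.mul_e]

/-- A triple `(A,B,C)` of bijections of `L` is an autotopism of `(L,·)` if
`A(x)·B(y) = C(x·y)` for all `x, y`. -/
def IsAutotopism (A B C : L → L) : Prop :=
  Function.Bijective A ∧ Function.Bijective B ∧ Function.Bijective C ∧
    ∀ x y, Q.mul (A x) (B y) = C (Q.mul x y)

/-- A bijection `U` is ρ-regular if `(I,U,U)` is an autotopism. -/
def IsRhoRegular (U : L → L) : Prop := Q.IsAutotopism id U U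

/-- A bijection `U` is λ-regular if `(U,I,U)` is an autotopism. -/
def IsLambdaRegular (U : L → L) : Prop := Q.IsAutotopism U id U

/-- `U'` is an adjoint of the bijection `U` if `(U, U'⁻¹, I)` is an autotopism. -/
def IsMuAdjoint (U U' : L → L) : Prop :=
  letI : Nonempty L := ⟨Q.e⟩
  Function.Bijective U' ∧ Q.IsAutotopism U (Function.invFun U') id

/-- `U` is μ-regular if it has an adjoint, i.e. `(U, U'⁻¹, I)` is an
autotopism for some bijection `U'`. The μ-regular bijections form `Φ(L,·)`. -/
def IsMuRegular (U : L → L) : Prop := ∃ U', Q.IsMuAdjoint U U'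

/-- `U'` belongs to `Ψ(L,·)`, the group of adjoints of μ-regular bijections. -/
def IsPsi (U' : L → L) : Prop := ∃ U, Q.IsMuAdjoint U U'

/-- Membership in the left nucleus `N_λ`. -/
def InNlambda (a : L) : Prop := ∀ y z, Q.mul a (Q.mul y z) = Q.mul (Q.mul a y) z

/-- Membership in the middle nucleus `N_μ`. -/
def InNmu (a : L) : Prop := ∀ y z, Q.mul (Q.mul y a) z = Q.mul y (Q.mul a z)

/-- Membership in the right nucleus `N_ρ`. -/
def InNrho (a : L) : Prop := ∀ y z, Q.mul (Q.mul y z) a = Q.mul y (Q.mul z a)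

/-- Membership in the nucleus `N = N_λ ∩ N_μ ∩ N_ρ`. -/
def InNucleus (a : L) : Prop := Q.InNlambda a ∧ Q.InNmu a ∧ Q.InNrho a

/-- Membership in the center `Z = N ∩ C`. -/
def InCenter (a : L) : Prop := Q.InNucleus a ∧ ∀ x, Q.mul a x = Q.mul x a

end Loop


/-- An automorphism commutes with the left-inverse map (in `rdiv`-form). -/
theorem aut_rdiv_e {L : Type*} (Q : Loop L) {α : Equiv.Perm L} (hα : α ∈ Q.autGroup) (t : L) :
    α (Q.rdiv Q.e t) = Q.rdiv Q.e (α t) := by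
  have h1 : Q.mul (α (Q.rdiv Q.e t)) (α t) = Q.e := by
    rw [← hα, Q.rdiv_mul, Q.aut_fix_e hα]
  have h2 := congrArg (fun s => Q.rdiv s (α t)) h1
  simpa [Q.mul_rdiv] using h2

/-- If `H(L)` is an Osborn loop, then for every `x ∈ L` and all
`φ ∈ A(L)` the triples `(I, U, U)` are autotopisms of `(L,·)` for
`U₁ : y ↦ (y/x)·φ⁻¹(x)`, `U₂ : y ↦ x·(((x\y)/x)·φ⁻¹(x))` and
`U₃ : y ↦ y·(x^λ·φ⁻¹(x))`. -/
theorem holomorph_osborn_rho_autotopisms {L : Type*} (Q : Loop L)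
    (A : Subgroup (Equiv.Perm L)) (hA : A ≤ Q.autGroup) :
    (Q.Holomorph A hA).IsOsborn →
      ∀ (x : L) (φ : A),
        Q.IsAutotopism id (fun y => Q.mul (Q.rdiv y x) (((φ⁻¹ : A) : Equiv.Perm L) x))
          (fun y => Q.mul (Q.rdiv y x) (((φ⁻¹ : A) : Equiv.Perm L) x)) ∧
        Q.IsAutotopism id (fun y => Q.mul x (Q.mul (Q.rdiv (Q.ldiv x y) x) (((φ⁻¹ : A) : Equiv.Perm L) x)))
          (fun y => Q.mul x (Q.mul (Q.rdiv (Q.ldiv x y) x) (((φ⁻¹ : A) : Equiv.Perm L) x))) ∧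
        Q.IsAutotopism id (fun y => Q.mul y (Q.mul (Q.linv x) (((φ⁻¹ : A) : Equiv.Perm L) x)))
          (fun y => Q.mul y (Q.mul (Q.linv x) (((φ⁻¹ : A) : Equiv.Perm L) x))) := by
  intro hOs x φ
  set x' : L := ((φ⁻¹ : A) : Equiv.Perm L) x with hx'
  -- plain Osborn identity in Q
  have hS : ∀ u w, Q.mul x (Q.mul (Q.mul u w) x) =
      Q.mul (Q.mul x (Q.mul (Q.mul u (Q.linv x)) x)) (Q.mul w x) := by
    intro u w
    have h := congrArg Prod.snd (hOs (1, x) (1, u) (1, w))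
    simp [Loop.Holomorph, Loop.linv] at h
    exact h
  -- twisted Osborn identity
  have hC : ∀ u w, Q.mul x (Q.mul (Q.mul u w) x') =
      Q.mul (Q.mul x (Q.mul (Q.mul u (Q.linv x)) x)) (Q.mul w x') := by
    intro u w
    have h := congrArg Prod.snd (hOs (1, x') (1, ((φ⁻¹ : A) : Equiv.Perm L) u) (φ, w))
    have hφ := Q.mem_autGroup_iff.mp (hA φ.2)
    simp [Loop.Holomorph, Loop.linv, hφ, aut_rdiv_e Q (hA φ.2), hx', Equiv.Perm.one_symm] at h
    exact h
  -- E u = a solver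
  have hE : ∀ a, Q.mul x (Q.mul (Q.mul (Q.rdiv (Q.rdiv (Q.ldiv x a) x) (Q.linv x)) (Q.linv x)) x) = a := by
    intro a
    rw [Q.rdiv_mul, Q.rdiv_mul, Q.mul_ldiv]
  -- key identity: a · U₁ b = U₂ (a·b)
  have hK : ∀ a b, Q.mul a (Q.mul (Q.rdiv b x) x') =
      Q.mul x (Q.mul (Q.rdiv (Q.ldiv x (Q.mul a b)) x) x') := by
    intro a b
    set u : L := Q.rdiv (Q.rdiv (Q.ldiv x a) x) (Q.linv x) with hu
    have h1 := hS u (Q.rdiv b x)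
    rw [hE a, Q.rdiv_mul] at h1
    have h2 : Q.mul u (Q.rdiv b x) = Q.rdiv (Q.ldiv x (Q.mul a b)) x := by
      have h3 := congrArg (Q.ldiv x) h1
      rw [Q.ldiv_mul] at h3
      have h4 := congrArg (fun s => Q.rdiv s x) h3
      simpa [Q.mul_rdiv] using h4
    have h5 := hC u (Q.rdiv b x)
    rw [hE a, h2] at h5
    exact h5.symm
  -- U₁ = U₂
  have hEq12 : ∀ b, Q.mul (Q.rdiv b x) x' =
      Q.mul x (Q.mul (Q.rdiv (Q.ldiv x b) x) x') := by
    intro b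
    have := hK Q.e b
    rwa [Q.e_mul, Q.e_mul] at this
  -- U₂ = U₃
  have hEq23 : ∀ b, Q.mul x (Q.mul (Q.rdiv (Q.ldiv x b) x) x') =
      Q.mul b (Q.mul (Q.linv x) x') := by
    intro b
    set u : L := Q.rdiv (Q.rdiv (Q.ldiv x b) x) (Q.linv x) with hu
    have h := hC u (Q.linv x)
    rw [hE b, Q.rdiv_mul] at h
    exact h
  have hMul1 : ∀ a b, Q.mul a (Q.mul (Q.rdiv b x) x') =
      Q.mul (Q.rdiv (Q.mul a b) x) x' :=
    fun a b => (hK a b).trans (hEq12 (Q.mul a b)).symm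
  have hbij1 : Function.Bijective (fun y => Q.mul (Q.rdiv y x) x') := by
    apply Function.bijective_iff_has_inverse.mpr
    refine ⟨fun y => Q.mul (Q.rdiv y x') x, fun y => ?_, fun y => ?_⟩
    · simp [Q.mul_rdiv, Q.rdiv_mul]
    · simp [Q.mul_rdiv, Q.rdiv_mul]
  have hfun2 : (fun y => Q.mul x (Q.mul (Q.rdiv (Q.ldiv x y) x) x')) =
      (fun y => Q.mul (Q.rdiv y x) x') := funext fun b => (hEq12 b).symm
  have hfun3 : (fun y => Q.mul y (Q.mul (Q.linv x) x')) =
      (fun y => Q.mul (Q.rdiv y x) x') :=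
    funext fun b => ((hEq12 b).trans (hEq23 b)).symm
  have hbij2 : Function.Bijective (fun y => Q.mul x (Q.mul (Q.rdiv (Q.ldiv x y) x) x')) := by
    rw [hfun2]; exact hbij1
  have hbij3 : Function.Bijective (fun y => Q.mul y (Q.mul (Q.linv x) x')) := by
    rw [hfun3]; exact hbij1
  refine ⟨⟨Function.bijective_id, hbij1, hbij1, fun a b => hMul1 a b⟩,
    ⟨Function.bijective_id, hbij2, hbij2, fun a b => ?_⟩,
    ⟨Function.bijective_id, hbij3, hbij3, fun a b => ?_⟩⟩
  · simp only [id_eq]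
    rw [← hEq12, ← hEq12]
    exact hMul1 a b
  · simp only [id_eq]
    rw [← hEq23, ← hEq12, ← hEq23, ← hEq12]
    exact hMul1 a b
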